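/- Let τ > 0 and let a > −1. Let θ : [0,∞) → ℝ be twice continuously differentiable with θ''(t) + τ·θ'(t) + θ(t)² − 1 = 0 for all t ≥ 0, and suppose θ(t) ≥ a for all t ≥ 0. Then θ(t) → 1 as t → ∞. -/

import Mathlib

open Set Filter

-- algebra helper: a cubic level set has at most 3 points
lemma cubic_level (x y : ℝ) (hxy : x < y) (h : x^3/3 - x = y^3/3 - y) :
    x^2 + x*y + y^2 = 3 := by
  have h0 : (y - x) * (x^2 + x*y + y^2 - 3) = 0 := by linear_combination (-3:ℝ)*h
  have := (mul_eq_zero.mp h0).resolve_left (sub_ne_zero.mpr hxy.ne')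
  linarith

lemma cubic_four (L e1 e2 e3 e4 : ℝ) (h12 : e1 < e2) (h23 : e2 < e3) (h34 : e3 < e4)
    (g1 : e1^3/3 - e1 = L) (g2 : e2^3/3 - e2 = L) (g3 : e3^3/3 - e3 = L)
    (g4 : e4^3/3 - e4 = L) : False := by
  have p12 := cubic_level e1 e2 h12 (by rw [g1, g2])
  have p13 := cubic_level e1 e3 (h12.trans h23) (by rw [g1, g3])
  have p14 := cubic_level e1 e4 ((h12.trans h23).trans h34) (by rw [g1, g4])
  have p23 := cubic_level e2 e3 h23 (by rw [g2, g3])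
  have s123 : (e3 - e2) * (e1 + e2 + e3) = 0 := by linear_combination p13 - p12
  have s124 : (e4 - e2) * (e1 + e2 + e4) = 0 := by linear_combination p14 - p12
  have h3 := (mul_eq_zero.mp s123).resolve_left (sub_ne_zero.mpr h23.ne')
  have h4 := (mul_eq_zero.mp s124).resolve_left (sub_ne_zero.mpr (h23.trans h34).ne')
  have : e3 = e4 := by linarith
  exact h34.ne this

set_option maxHeartbeats 2000000 in
/-- For `τ > 0`, any global solution of `θ'' + τθ' + θ² - 1 = 0` on `[0,∞)` which is bounded
from below by some `a > -1` tends to `1` at infinity. -/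
theorem stmt_14 (τ a : ℝ) (hτ : 0 < τ) (ha : -1 < a) (θ θ' θ'' : ℝ → ℝ)
    (hd1 : ∀ t ∈ Ici (0 : ℝ), HasDerivWithinAt θ (θ' t) (Ici 0) t)
    (hd2 : ∀ t ∈ Ici (0 : ℝ), HasDerivWithinAt θ' (θ'' t) (Ici 0) t)
    (hc : ContinuousOn θ'' (Ici 0))
    (heq : ∀ t : ℝ, 0 ≤ t → θ'' t + τ * θ' t + (θ t) ^ 2 - 1 = 0)
    (hlb : ∀ t : ℝ, 0 ≤ t → a ≤ θ t) :
    Tendsto θ atTop (nhds 1) := by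
  obtain ⟨E, hEdef⟩ : ∃ E : ℝ → ℝ, E = fun t => θ' t ^ 2 / 2 + θ t ^ 3 / 3 - θ t := ⟨_, rfl⟩
  have hcθ : ContinuousOn θ (Ici 0) := fun t ht => (hd1 t ht).continuousWithinAt
  have hcθ' : ContinuousOn θ' (Ici 0) := fun t ht => (hd2 t ht).continuousWithinAt
  have hE' : ∀ t ∈ Ici (0:ℝ), HasDerivWithinAt E (-τ * θ' t ^ 2) (Ici 0) t := by
    intro t ht
    rw [hEdef]
    have h1 := (((hd2 t ht).pow 2).div_const 2).add (((hd1 t ht).pow 3).div_const 3)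
    have h2 := h1.sub (hd1 t ht)
    refine h2.congr_deriv ?_
    have h := heq t ht
    push_cast
    linear_combination θ' t * h
  have hcE : ContinuousOn E (Ici 0) := hEdef ▸
    (((hcθ'.pow 2).div_const 2).add ((hcθ.pow 3).div_const 3)).sub hcθ
  have hInt : ∀ s t : ℝ, 0 ≤ s → s ≤ t → IntervalIntegrable (fun x => θ' x ^ 2) MeasureTheory.volume s t := by
    intro s t hs hst
    apply ContinuousOn.intervalIntegrable
    exact (hcθ'.pow 2).mono (by rw [uIcc_of_le hst]; intro x hx; exact le_trans hs hx.1)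
  have hFTC : ∀ s t : ℝ, 0 ≤ s → s ≤ t → τ * ∫ x in s..t, θ' x ^ 2 = E s - E t := by
    intro s t hs hst
    have key : ∫ x in s..t, (-τ * θ' x ^ 2) = E t - E s := by
      apply intervalIntegral.integral_eq_sub_of_hasDeriv_right_of_le hst
      · exact hcE.mono (fun x hx => le_trans hs hx.1)
      · intro x hx
        exact (hE' x (le_of_lt (lt_of_le_of_lt hs hx.1))).mono
          (fun y hy => le_of_lt (lt_of_le_of_lt hs hx.1) |>.trans (le_of_lt hy))
      · exact (hInt s t hs hst).const_mul _
    rw [intervalIntegral.integral_const_mul] at key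
    linarith
  have hEanti : ∀ s t : ℝ, 0 ≤ s → s ≤ t → E t ≤ E s := by
    intro s t hs hst
    have h1 := hFTC s t hs hst
    have h2 : (0:ℝ) ≤ ∫ x in s..t, θ' x ^ 2 :=
      intervalIntegral.integral_nonneg hst (fun x _ => sq_nonneg _)
    nlinarith
  -- upper bound on θ
  obtain ⟨M, hMdef⟩ : ∃ M : ℝ, M = max 2 (3 * E 0 + 3) := ⟨_, rfl⟩
  have hub : ∀ t : ℝ, 0 ≤ t → θ t ≤ M := by
    intro t ht
    by_contra hcon
    push_neg at hcon
    have h2 : (2:ℝ) ≤ M := hMdef ▸ le_max_left _ _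
    have h3 : 3 * E 0 + 3 ≤ M := hMdef ▸ le_max_right _ _
    have hEt : E t ≤ E 0 := hEanti 0 t le_rfl ht
    have hE : θ t ^ 3 / 3 - θ t ≤ E 0 := by
      have := sq_nonneg (θ' t); simp only [hEdef] at hEt ⊢; nlinarith
    have hx2 : 2 < θ t := h2.trans_lt hcon
    have hx3 : 3 * E 0 + 3 < θ t := h3.trans_lt hcon
    have hp : 0 < θ t * (θ t ^ 2 - 4) := mul_pos (by linarith) (by nlinarith)
    have hp2 : 4 * θ t < θ t ^ 3 := by nlinarith [hp]
    linarith [hp2, hE, hx3]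
  -- absolute bound
  obtain ⟨B, hBdef⟩ : ∃ B : ℝ, B = max (max (|a|) (|M|)) 1 := ⟨_, rfl⟩
  have hB1 : (1:ℝ) ≤ B := hBdef ▸ le_max_right _ _
  have habs : ∀ t : ℝ, 0 ≤ t → |θ t| ≤ B := by
    intro t ht
    rw [abs_le]
    constructor
    · have h1 : |a| ≤ B := hBdef ▸ le_trans (le_max_left _ _) (le_max_left _ _)
      have := hlb t ht
      have := neg_abs_le a
      linarith
    · have h1 : |M| ≤ B := hBdef ▸ le_trans (le_max_right _ _) (le_max_left _ _)
      have := hub t ht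
      have := le_abs_self M
      linarith
  -- lower bound on E and on the cubic part
  have hcub : ∀ t : ℝ, 0 ≤ t → -(B^3/3 + B) ≤ θ t ^ 3 / 3 - θ t := by
    intro t ht
    have h := habs t ht
    rw [abs_le] at h
    nlinarith [h.1, h.2, sq_nonneg (θ t + B), sq_nonneg (θ t - B), hB1]
  have hElb : ∀ t : ℝ, 0 ≤ t → -(B^3/3 + B) ≤ E t := by
    intro t ht
    have := hcub t ht
    have := sq_nonneg (θ' t)
    simp only [hEdef]
    nlinarith
  -- bound on θ'
  obtain ⟨C1, hC1def⟩ : ∃ C1 : ℝ, C1 = max 1 (2 * (E 0 + B^3/3 + B)) := ⟨_, rfl⟩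
  have hθ'sq : ∀ t : ℝ, 0 ≤ t → θ' t ^ 2 ≤ 2 * (E 0 + B^3/3 + B) := by
    intro t ht
    have h1 : E t ≤ E 0 := hEanti 0 t le_rfl ht
    have h2 := hcub t ht
    simp only [hEdef] at h1 ⊢
    linarith
  have hθ'b : ∀ t : ℝ, 0 ≤ t → |θ' t| ≤ C1 := by
    intro t ht
    have h := hθ'sq t ht
    rcases le_or_gt (|θ' t|) 1 with h1 | h1
    · exact h1.trans (hC1def ▸ le_max_left _ _)
    · have : |θ' t| ≤ θ' t ^ 2 := by nlinarith [abs_nonneg (θ' t), sq_abs (θ' t)]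
      exact this.trans (h.trans (hC1def ▸ le_max_right _ _))
  have hC1pos : (0:ℝ) < C1 := lt_of_lt_of_le one_pos (hC1def ▸ le_max_left _ _)
  -- bound on θ''
  obtain ⟨C2, hC2def⟩ : ∃ C2 : ℝ, C2 = 1 + B^2 + τ * C1 := ⟨_, rfl⟩
  have hC2pos : (0:ℝ) < C2 := by rw [hC2def]; positivity
  have hθ''b : ∀ t : ℝ, 0 ≤ t → |θ'' t| ≤ C2 := by
    intro t ht
    have h1 := heq t ht
    have h2 := habs t ht
    have h3 := hθ'b t ht
    rw [abs_le] at h2 h3 ⊢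
    rw [hC2def]
    constructor
    · nlinarith [h2.1, h2.2, h3.1, h3.2, sq_nonneg (θ t), sq_nonneg B]
    · nlinarith [h2.1, h2.2, h3.1, h3.2, sq_nonneg (θ t), sq_nonneg B]
  -- E tends to a limit L
  obtain ⟨L, hLdef⟩ : ∃ L : ℝ, L = sInf (E '' Ici 0) := ⟨_, rfl⟩
  have hne : (E '' Ici 0).Nonempty := ⟨E 0, mem_image_of_mem E (mem_Ici.mpr le_rfl)⟩
  have hbdd : BddBelow (E '' Ici 0) := by
    refine ⟨-(B^3/3 + B), ?_⟩
    rintro x ⟨t, ht, rfl⟩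
    exact hElb t ht
  have hLle : ∀ t : ℝ, 0 ≤ t → L ≤ E t := fun t ht => hLdef ▸ csInf_le hbdd (mem_image_of_mem E (mem_Ici.mpr ht))
  have hEL : Tendsto E atTop (nhds L) := by
    rw [Metric.tendsto_atTop]
    intro ε hε
    obtain ⟨x, ⟨t₀, ht₀, rfl⟩, hx⟩ := exists_lt_of_csInf_lt hne (hLdef ▸ lt_add_of_pos_right L hε)
    refine ⟨t₀, fun t ht => ?_⟩
    have h1 := hLle t (ht₀.trans ht)
    have h2 := hEanti t₀ t ht₀ ht
    rw [Real.dist_eq, abs_lt]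
    constructor <;> linarith
  -- Barbalat's lemma: θ' → 0
  have hθ'0 : Tendsto θ' atTop (nhds 0) := by
    by_contra hcon
    rw [Metric.tendsto_atTop] at hcon
    push_neg at hcon
    obtain ⟨ε, hε, hfreq⟩ := hcon
    obtain ⟨δ, hδdef⟩ : ∃ δ : ℝ, δ = ε / (2 * C2) := ⟨_, rfl⟩
    have hδpos : 0 < δ := by rw [hδdef]; positivity
    have hδC2 : C2 * δ = ε / 2 := by rw [hδdef]; field_simp
    have key : ∀ t : ℝ, 0 ≤ t → ε ≤ |θ' t| → τ * (δ * (ε^2/4)) ≤ E t - E (t + δ) := by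
      intro t ht hθε
      have hsub : Icc t (t+δ) ⊆ Ici (0:ℝ) := fun x hx => le_trans ht hx.1
      have hlow : ∀ s ∈ Icc t (t+δ), ε^2/4 ≤ θ' s ^ 2 := by
        intro s hs
        have hder : ∀ x ∈ Icc t (t+δ), HasDerivWithinAt θ' (θ'' x) (Icc t (t+δ)) x :=
          fun x hx => (hd2 x (hsub hx)).mono hsub
        have hbd : ∀ x ∈ Icc t (t+δ), ‖θ'' x‖ ≤ C2 := fun x hx => by
          rw [Real.norm_eq_abs]; exact hθ''b x (hsub hx)
        have hmvt := Convex.norm_image_sub_le_of_norm_hasDerivWithin_le hder hbd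
          (convex_Icc _ _) (left_mem_Icc.mpr (by linarith)) hs
        rw [Real.norm_eq_abs, Real.norm_eq_abs] at hmvt
        have h1 : |s - t| ≤ δ := by
          rw [abs_le]; exact ⟨by linarith [hs.1], by linarith [hs.2]⟩
        have h2 : |θ' s - θ' t| ≤ ε/2 := by nlinarith [abs_nonneg (s-t), hC2pos]
        have h4 := abs_sub_abs_le_abs_sub (θ' t) (θ' s)
        rw [abs_sub_comm (θ' t) (θ' s)] at h4
        have h3 : ε/2 ≤ |θ' s| := by linarith
        nlinarith [sq_abs (θ' s), abs_nonneg (θ' s)]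
      have hint := hInt t (t+δ) ht (by linarith)
      have hmono := intervalIntegral.integral_mono_on (by linarith : t ≤ t+δ)
        (intervalIntegrable_const (c := ε^2/4)) hint hlow
      rw [intervalIntegral.integral_const] at hmono
      simp only [add_sub_cancel_left, smul_eq_mul] at hmono
      have hFt := hFTC t (t+δ) ht (by linarith)
      have hmul : τ * (δ * (ε^2/4)) ≤ τ * ∫ x in t..(t+δ), θ' x ^ 2 :=
        mul_le_mul_of_nonneg_left hmono hτ.le
      linarith
    have hE2 : Tendsto (fun t => E t - E (t+δ)) atTop (nhds 0) := by
      have h1 : Tendsto (fun t : ℝ => E (t + δ)) atTop (nhds L) :=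
        hEL.comp (tendsto_atTop_add_const_right _ δ tendsto_id)
      simpa using hEL.sub h1
    have hpos : (0:ℝ) < τ * (δ * (ε^2/4)) := by positivity
    have hev : ∀ᶠ t in atTop, E t - E (t+δ) < τ * (δ * (ε^2/4)) :=
      hE2.eventually (eventually_lt_nhds hpos)
    obtain ⟨N, hN⟩ := eventually_atTop.mp hev
    obtain ⟨t, htN, htε⟩ := hfreq (max N 0)
    have h0t : (0:ℝ) ≤ t := le_trans (le_max_right N 0) htN
    have hd0 : ε ≤ |θ' t| := by
      rw [Real.dist_eq, sub_zero] at htε; exact htε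
    have hk := key t h0t hd0
    have := hN t (le_trans (le_max_left N 0) htN)
    linarith
  -- the cubic potential
  obtain ⟨g, hgdef⟩ : ∃ g : ℝ → ℝ, g = fun x => x^3/3 - x := ⟨_, rfl⟩
  have hgcont : Continuous g := by
    rw [hgdef]; exact (continuous_pow 3).div_const 3 |>.sub continuous_id
  have hgθ : Tendsto (fun t => g (θ t)) atTop (nhds L) := by
    have h2 : Tendsto (fun t => θ' t ^ 2 / 2) atTop (nhds (0^2/2)) := (hθ'0.pow 2).div_const 2
    have h1 : Tendsto (fun t => E t - θ' t ^ 2 / 2) atTop (nhds (L - 0^2/2)) := hEL.sub h2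
    have h3 : ∀ t : ℝ, E t - θ' t ^ 2 / 2 = g (θ t) := by
      intro t; rw [hgdef, hEdef]; ring
    simpa [h3] using h1
  -- limsup and liminf
  have hba : IsBoundedUnder (· ≤ ·) atTop θ :=
    ⟨M, eventually_map.mpr ((eventually_ge_atTop 0).mono hub)⟩
  have hbb : IsBoundedUnder (· ≥ ·) atTop θ :=
    ⟨a, eventually_map.mpr ((eventually_ge_atTop 0).mono hlb)⟩
  have hcoba : IsCoboundedUnder (· ≤ ·) atTop θ := hbb.isCoboundedUnder_flip
  have hcobb : IsCoboundedUnder (· ≥ ·) atTop θ := hba.isCoboundedUnder_flip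
  obtain ⟨c, hcdef⟩ : ∃ c, c = limsup θ atTop := ⟨_, rfl⟩
  obtain ⟨d, hddef⟩ : ∃ d, d = liminf θ atTop := ⟨_, rfl⟩
  -- any frequent limit value of θ is a root of g = L
  have hlim : ∀ x : ℝ, (∀ δ > 0, ∃ᶠ t in atTop, |θ t - x| < δ) → g x = L := by
    intro x hx
    by_contra hne
    have hη : 0 < |g x - L| / 2 := by
      have := abs_pos.mpr (sub_ne_zero.mpr hne); linarith
    obtain ⟨δ, hδpos, hδ⟩ := Metric.continuousAt_iff.mp hgcont.continuousAt (|g x - L| / 2) hη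
    have hev : ∀ᶠ t in atTop, dist (g (θ t)) L < |g x - L| / 2 :=
      Metric.tendsto_nhds.mp hgθ _ hη
    obtain ⟨t, h1, h2⟩ := ((hx δ hδpos).and_eventually hev).exists
    have h3 : dist (g (θ t)) (g x) < |g x - L| / 2 := hδ (by rw [Real.dist_eq]; exact h1)
    rw [Real.dist_eq] at h2 h3
    have := abs_sub_le (g x) (g (θ t)) L
    rw [abs_sub_comm (g x) (g (θ t))] at this
    linarith
  have hgc : g c = L := by
    apply hlim
    intro δ hδ
    have h1 : ∃ᶠ t in atTop, c - δ < θ t :=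
      frequently_lt_of_lt_limsup hcoba (hcdef ▸ (by linarith : c - δ < c))
    have h2 : ∀ᶠ t in atTop, θ t < c + δ :=
      eventually_lt_of_limsup_lt (hcdef ▸ (by linarith : c < c + δ)) hba
    exact (h1.and_eventually h2).mono fun t ⟨hA, hB⟩ => abs_sub_lt_iff.mpr ⟨by linarith, by linarith⟩
  have hdc : d ≤ c := by rw [hcdef, hddef]; exact liminf_le_limsup hba hbb
  have hcd : d = c := by
    by_contra hne
    have hlt : d < c := hdc.lt_of_ne hne
    have hex : ∃ e, d < e ∧ e < c ∧ g e ≠ L := by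
      by_contra hcon
      push_neg at hcon
      have h' : ∀ e, d < e → e < c → e^3/3 - e = L := by
        intro e h1 h2
        have := hcon e h1 h2
        rw [hgdef] at this
        exact this
      exact cubic_four L (d+(c-d)/5) (d+2*(c-d)/5) (d+3*(c-d)/5) (d+4*(c-d)/5)
        (by linarith) (by linarith) (by linarith)
        (h' _ (by linarith) (by linarith)) (h' _ (by linarith) (by linarith))
        (h' _ (by linarith) (by linarith)) (h' _ (by linarith) (by linarith))
    obtain ⟨e, hde, hec, hgeL⟩ := hex
    have hfe : ∀ N : ℝ, ∃ t ≥ N, θ t = e := by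
      intro N
      obtain ⟨t₁, ht₁N, ht₁⟩ := frequently_atTop.mp
        (frequently_lt_of_lt_limsup hcoba (hcdef ▸ hec)) (max N 0)
      obtain ⟨t₂, ht₂t₁, ht₂⟩ := frequently_atTop.mp
        (frequently_lt_of_liminf_lt hcobb (hddef ▸ hde)) t₁
      have h0 : (0:ℝ) ≤ t₁ := le_trans (le_max_right N 0) ht₁N
      have hco : ContinuousOn θ (Icc t₁ t₂) := hcθ.mono fun x hx => le_trans h0 hx.1
      obtain ⟨s, hs, hse⟩ := intermediate_value_Icc' ht₂t₁ hco ⟨ht₂.le, ht₁.le⟩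
      exact ⟨s, le_trans (le_max_left N 0) (ht₁N.trans hs.1), hse⟩
    apply hgeL
    apply hlim
    intro δ hδ
    rw [frequently_atTop]
    intro N
    obtain ⟨t, htN, hte⟩ := hfe N
    exact ⟨t, htN, by rw [hte]; simpa using hδ⟩
  have hθc : Tendsto θ atTop (nhds c) :=
    tendsto_of_liminf_eq_limsup (by rw [← hddef, hcd]) (by rw [← hcdef]) hba hbb
  have hac : a ≤ c := ge_of_tendsto hθc ((eventually_ge_atTop 0).mono hlb)
  have hθ''lim : Tendsto θ'' atTop (nhds (1 - c^2)) := by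
    have h1 : Tendsto (fun t => 1 - θ t ^ 2 - τ * θ' t) atTop (nhds (1 - c^2 - τ * 0)) :=
      (tendsto_const_nhds.sub (hθc.pow 2)).sub (hθ'0.const_mul τ)
    have h2 : (fun t => 1 - θ t ^ 2 - τ * θ' t) =ᶠ[atTop] θ'' := by
      filter_upwards [eventually_ge_atTop (0:ℝ)] with t ht
      have := heq t ht; linarith
    simpa using h1.congr' h2
  have hderAt : ∀ x : ℝ, 0 < x → HasDerivAt θ' (θ'' x) x :=
    fun x hx => (hd2 x hx.le).hasDerivAt (Ici_mem_nhds hx)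
  have main1 : ∀ K : ℝ, 0 < K → ¬ (∀ᶠ t in atTop, K < θ'' t) := by
    intro K hK hevK
    obtain ⟨T₀, hT₀⟩ := eventually_atTop.mp hevK
    obtain ⟨N, hN⟩ := eventually_atTop.mp (hθ'0.eventually (eventually_lt_nhds one_pos))
    obtain ⟨T, hTdef⟩ : ∃ T : ℝ, T = max T₀ 1 := ⟨_, rfl⟩
    have hT1 : (1:ℝ) ≤ T := hTdef ▸ le_max_right _ _
    have hTT₀ : T₀ ≤ T := hTdef ▸ le_max_left _ _
    have hmvt := Convex.mul_sub_le_image_sub_of_le_deriv (convex_Ici T)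
      (hcθ'.mono (Ici_subset_Ici.mpr (by linarith)))
      (fun x hx => by
        rw [interior_Ici] at hx
        exact (hderAt x (by linarith [mem_Ioi.mp hx])).differentiableAt.differentiableWithinAt)
      (C := K) (fun x hx => by
        rw [interior_Ici] at hx
        rw [(hderAt x (by linarith [mem_Ioi.mp hx])).deriv]
        exact (hT₀ x (le_trans hTT₀ (mem_Ioi.mp hx).le)).le)
    obtain ⟨y, hydef⟩ : ∃ y : ℝ, y = max N (T + (2 + C1)/K) := ⟨_, rfl⟩
    have hyN : N ≤ y := hydef ▸ le_max_left _ _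
    have hyT2 : T + (2 + C1)/K ≤ y := hydef ▸ le_max_right _ _
    have hKdiv : (0:ℝ) ≤ (2 + C1)/K := by positivity
    have hyT : T ≤ y := by linarith
    have h5 := hmvt T (mem_Ici.mpr le_rfl) y (mem_Ici.mpr hyT) hyT
    have h6 : (2 + C1)/K ≤ y - T := by linarith
    have h7 := mul_le_mul_of_nonneg_left h6 hK.le
    rw [mul_div_cancel₀ _ hK.ne'] at h7
    have h8 : |θ' T| ≤ C1 := hθ'b T (by linarith)
    rw [abs_le] at h8
    have h9 := hN y hyN
    linarith
  have main2 : ∀ K : ℝ, 0 < K → ¬ (∀ᶠ t in atTop, θ'' t < -K) := by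
    intro K hK hevK
    obtain ⟨T₀, hT₀⟩ := eventually_atTop.mp hevK
    obtain ⟨N, hN⟩ := eventually_atTop.mp
      (hθ'0.eventually (eventually_gt_nhds (by norm_num : (-1:ℝ) < 0)))
    obtain ⟨T, hTdef⟩ : ∃ T : ℝ, T = max T₀ 1 := ⟨_, rfl⟩
    have hT1 : (1:ℝ) ≤ T := hTdef ▸ le_max_right _ _
    have hTT₀ : T₀ ≤ T := hTdef ▸ le_max_left _ _
    have hmvt := Convex.image_sub_le_mul_sub_of_deriv_le (convex_Ici T)
      (hcθ'.mono (Ici_subset_Ici.mpr (by linarith)))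
      (fun x hx => by
        rw [interior_Ici] at hx
        exact (hderAt x (by linarith [mem_Ioi.mp hx])).differentiableAt.differentiableWithinAt)
      (C := -K) (fun x hx => by
        rw [interior_Ici] at hx
        rw [(hderAt x (by linarith [mem_Ioi.mp hx])).deriv]
        exact (hT₀ x (le_trans hTT₀ (mem_Ioi.mp hx).le)).le)
    obtain ⟨y, hydef⟩ : ∃ y : ℝ, y = max N (T + (2 + C1)/K) := ⟨_, rfl⟩
    have hyN : N ≤ y := hydef ▸ le_max_left _ _
    have hyT2 : T + (2 + C1)/K ≤ y := hydef ▸ le_max_right _ _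
    have hKdiv : (0:ℝ) ≤ (2 + C1)/K := by positivity
    have hyT : T ≤ y := by linarith
    have h5 := hmvt T (mem_Ici.mpr le_rfl) y (mem_Ici.mpr hyT) hyT
    have h6 : (2 + C1)/K ≤ y - T := by linarith
    have h7 := mul_le_mul_of_nonneg_left h6 hK.le
    rw [mul_div_cancel₀ _ hK.ne'] at h7
    have h8 : |θ' T| ≤ C1 := hθ'b T (by linarith)
    rw [abs_le] at h8
    have h9 := hN y hyN
    nlinarith
  have hc2 : 1 - c^2 = 0 := by
    by_contra hk
    rcases lt_or_gt_of_ne hk with hneg | hpos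
    · refine main2 ((c^2-1)/2) (by linarith) ?_
      have := hθ''lim.eventually (eventually_lt_nhds (by linarith : 1 - c^2 < (1-c^2)/2))
      exact this.mono fun t ht => by linarith
    · refine main1 ((1-c^2)/2) (by linarith) ?_
      exact hθ''lim.eventually (eventually_gt_nhds (by linarith : (1-c^2)/2 < 1-c^2))
  have hcsq : c = 1 ∨ c = -1 := by
    have h : (c - 1) * (c + 1) = 0 := by linear_combination -hc2
    rcases mul_eq_zero.mp h with h | h
    · left; linarith
    · right; linarith
  have hc1 : c = 1 := by
    rcases hcsq with h | h
    · exact h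
    · exfalso; rw [h] at hac; linarith
  exact hc1 ▸ hθc
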